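/- Inversion in G_A permutes the pieces of the discretization: for γ = α.β ∈ I_A with β = β̂ b (b the last letter of β), the inverse of G_{α.β} equals G_{β̂.αb}, i.e., (x,n,y) ∈ G_{α.β} if and only if (y,−n,x) ∈ G_{β̂.(αb)}. -/

import Mathlib

/-- The one-sided shift space of the {0,1}-matrix A. -/
def SigmaA {N : ℕ} (A : Matrix (Fin N) (Fin N) ℝ) :=
  {x : ℕ → Fin N // ∀ n, A (x n) (x (n + 1)) = 1}

/-- The shift map on Σ_A. -/
def shiftA {N : ℕ} (A : Matrix (Fin N) (Fin N) ℝ) (x : SigmaA A) : SigmaA A :=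
  ⟨fun n => x.1 (n + 1), fun n => x.2 (n + 1)⟩

/-- Admissibility of a finite word. -/
def AdmWord {N : ℕ} (A : Matrix (Fin N) (Fin N) ℝ) (w : List (Fin N)) : Prop :=
  w.Chain' (fun i j => A i j = 1)

/-- Membership of γ = (α, β) in the index set I_A : α, β admissible, β nonempty, and
either α is empty or A_{last α, last β} = 1. -/
def IdxA {N : ℕ} (A : Matrix (Fin N) (Fin N) ℝ) (α β : List (Fin N)) : Prop :=
  AdmWord A α ∧ AdmWord A β ∧ β ≠ [] ∧
    (α = [] ∨ ∃ (hα : α ≠ []) (hβ : β ≠ []), A (α.getLast hα) (β.getLast hβ) = 1)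

/-- Membership of (x,n,y) in the piece G_γ = ℓ⁻¹(γ), γ = α.β : the cocycle value is
n = |α| − |β| + 1, x = α σ^{|β|−1}(y), y = β σ^{|β|}(y), and κ(x,n,y) = |β| − 1
(i.e. the coincidence σ^{n+k} x = σ^k y holds at k = |β|−1 and at no admissible
smaller k). -/
def InG {N : ℕ} (A : Matrix (Fin N) (Fin N) ℝ) (α β : List (Fin N))
    (x : SigmaA A) (n : ℤ) (y : SigmaA A) : Prop :=
  n = (α.length : ℤ) - (β.length : ℤ) + 1 ∧
  (∀ i (h : i < α.length), x.1 i = α.get ⟨i, h⟩) ∧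
  (∀ j, x.1 (α.length + j) = y.1 (β.length - 1 + j)) ∧
  (∀ i (h : i < β.length), y.1 i = β.get ⟨i, h⟩) ∧
  (0 ≤ n + ((β.length : ℤ) - 1) ∧
    (shiftA A)^[(n + ((β.length : ℤ) - 1)).toNat] x = (shiftA A)^[β.length - 1] y) ∧
  (∀ k : ℕ, k < β.length - 1 → 0 ≤ n + k →
    (shiftA A)^[(n + k).toNat] x ≠ (shiftA A)^[k] y)


lemma InG.symmDir {N : ℕ} {A : Matrix (Fin N) (Fin N) ℝ} {α β : List (Fin N)}
    (hβ : β ≠ []) {x y : SigmaA A} {n : ℤ}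
    (h : InG A α β x n y) :
    InG A β.dropLast (α ++ [β.getLast hβ]) y (-n) x := by
  obtain ⟨hn, hx, hxy, hy, ⟨hnn, hco⟩, hmin⟩ := h
  have hb : 1 ≤ β.length := List.length_pos_iff.mpr hβ
  refine ⟨?_, ?_, ?_, ?_, ⟨?_, ?_⟩, ?_⟩
  · simp only [List.length_dropLast, List.length_append, List.length_singleton]
    omega
  · intro i hi
    simp only [List.length_dropLast] at hi
    have hi' : i < β.length := by omega
    rw [hy i hi']
    simp [List.get_eq_getElem, List.getElem_dropLast]
  · intro j
    simp only [List.length_dropLast, List.length_append, List.length_singleton,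
      Nat.add_sub_cancel]
    exact (hxy j).symm
  · intro i hi
    simp only [List.length_append, List.length_singleton] at hi
    rcases Nat.lt_or_ge i α.length with hlt | hge
    · rw [hx i hlt]
      simp [List.get_eq_getElem, List.getElem_append_left hlt]
    · have hie : i = α.length := by omega
      subst hie
      have h1 : x.1 α.length = y.1 (β.length - 1) := by
        have := hxy 0; simpa using this
      rw [h1, hy (β.length - 1) (by omega)]
      simp [List.get_eq_getElem, List.getLast_eq_getElem]
  · simp only [List.length_append, List.length_singleton]
    omega
  · have e1 : (n + ((β.length : ℤ) - 1)).toNat = α.length := by omega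
    have e2 : (-n + ((((α ++ [β.getLast hβ]).length : ℕ) : ℤ) - 1)).toNat
        = β.length - 1 := by
      simp only [List.length_append, List.length_singleton]; omega
    have e3 : (α ++ [β.getLast hβ]).length - 1 = α.length := by
      simp only [List.length_append, List.length_singleton]; omega
    rw [e2, e3, ← e1, hco]
  · intro k hk hk2 hcontra
    simp only [List.length_append, List.length_singleton, Nat.add_sub_cancel] at hk
    have hm1 : (-n + (k : ℤ)).toNat < β.length - 1 := by
      omega
    have hm2 : (0 : ℤ) ≤ n + ((-n + (k : ℤ)).toNat : ℤ) := by omega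
    have := hmin _ hm1 hm2
    have ek : (n + (((-n + (k : ℤ)).toNat : ℕ) : ℤ)).toNat = k := by omega
    rw [ek] at this
    exact this hcontra.symm

/-- Inversion in G_A permutes the pieces of the discretization: for
γ = α.β ∈ I_A with β = β̂ b (b the last letter of β), one has
(x,n,y) ∈ G_{α.β}  ↔  (y,−n,x) ∈ G_{β̂.(αb)}. -/
theorem Ggamma_inversion (N : ℕ) (A : Matrix (Fin N) (Fin N) ℝ)
    (α β : List (Fin N)) (hβ : β ≠ []) (hγ : IdxA A α β) :
    ∀ (x y : SigmaA A) (n : ℤ),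
      InG A α β x n y ↔ InG A β.dropLast (α ++ [β.getLast hβ]) y (-n) x := by
  intro x y n
  constructor
  · exact InG.symmDir hβ
  · intro h
    have h2 := InG.symmDir (by simp) h
    have e1 : (α ++ [β.getLast hβ]).dropLast = α := by
      simp [List.dropLast_concat]
    have e2 : (α ++ [β.getLast hβ]).getLast (by simp) = β.getLast hβ := by
      simp [List.getLast_append]
    rw [e1, e2, List.dropLast_append_getLast hβ, neg_neg] at h2
    exact h2
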